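/- Suppose x, x_S : [s₀,∞) → ℝ^{n+1} with |⟨x(s) - x_S, ν(s)⟩| ≤ C₁ e^{-(2/n)s}, |x(s) - x_S| ≤ C₂ e^{-γ s} for some 0 < γ < 2/n, and |ν(s) - ν_S| ≤ C₃ e^{-γ s}, where ν_S is a fixed unit vector and x(s) - x_S = |x(s) - x_S| ν_S for all large s. Then |x(s) - x_S| ≤ C e^{-min(2γ, 2/n) s} for some constant C. Consequently, if γ is the supremum of exponential decay rates of |x - x_S|, then γ ≥ 2/n. -/
import Mathlib


open scoped RealInnerProductSpace

private lemma exp_shift_lo {α β s₀ s : ℝ} (h : β ≤ α) (hs : s₀ ≤ s) :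
    Real.exp (-α * s) ≤ Real.exp ((β - α) * s₀) * Real.exp (-β * s) := by
  rw [← Real.exp_add, Real.exp_le_exp]
  nlinarith [mul_nonneg (sub_nonneg.mpr h) (sub_nonneg.mpr hs)]

private lemma exp_shift_hi {α β s₂ s : ℝ} (h : β ≤ α) (hs : s ≤ s₂) :
    Real.exp (-β * s) ≤ Real.exp ((α - β) * s₂) * Real.exp (-α * s) := by
  rw [← Real.exp_add, Real.exp_le_exp]
  nlinarith [mul_nonneg (sub_nonneg.mpr h) (sub_nonneg.mpr hs)]

/-- Bootstrap argument for the rate of convergence: if the normal component of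
`x - x_S` decays at rate `2/n`, `x - x_S` and `ν - ν_S` decay at rate `γ < 2/n`, and
`x - x_S` is eventually radial, then `x - x_S` decays at rate `min(2γ, 2/n)`;
consequently the supremum of decay rates of `x - x_S` is at least `2/n`. -/
theorem bootstrap_rate_of_convergence (n : ℕ) (hn : 1 ≤ n)
    (s₀ γ C₁ C₂ C₃ : ℝ) (hγ : 0 < γ) (hγn : γ < 2 / (n : ℝ))
    (x ν : ℝ → EuclideanSpace ℝ (Fin (n + 1)))
    (xS νS : EuclideanSpace ℝ (Fin (n + 1))) (hνS : ‖νS‖ = 1)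
    (h1 : ∀ s : ℝ, s₀ ≤ s → |⟪x s - xS, ν s⟫| ≤ C₁ * Real.exp (-(2 / (n : ℝ)) * s))
    (h2 : ∀ s : ℝ, s₀ ≤ s → ‖x s - xS‖ ≤ C₂ * Real.exp (-γ * s))
    (h3 : ∀ s : ℝ, s₀ ≤ s → ‖ν s - νS‖ ≤ C₃ * Real.exp (-γ * s))
    (hradial : ∃ s₁ : ℝ, ∀ s : ℝ, s₁ ≤ s → x s - xS = ‖x s - xS‖ • νS) :
    (∃ C : ℝ, ∀ s : ℝ, s₀ ≤ s →
      ‖x s - xS‖ ≤ C * Real.exp (-(min (2 * γ) (2 / (n : ℝ))) * s)) ∧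
    (γ = sSup {δ : ℝ | ∃ C : ℝ, ∀ s : ℝ, s₀ ≤ s → ‖x s - xS‖ ≤ C * Real.exp (-δ * s)} →
      2 / (n : ℝ) ≤ γ) := by
  obtain ⟨s₁, hrad⟩ := hradial
  set m : ℝ := min (2 * γ) (2 / (n : ℝ)) with hm
  have hmγ : γ < m := lt_min (by linarith) hγn
  have hm2γ : m ≤ 2 * γ := min_le_left _ _
  have hmn : m ≤ 2 / (n : ℝ) := min_le_right _ _
  have hC₁0 : 0 ≤ C₁ := by
    have h := le_trans (abs_nonneg _) (h1 s₀ le_rfl)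
    nlinarith [Real.exp_pos (-(2 / (n : ℝ)) * s₀)]
  have hC₂0 : 0 ≤ C₂ := by
    have h := le_trans (norm_nonneg _) (h2 s₀ le_rfl)
    nlinarith [Real.exp_pos (-γ * s₀)]
  have hC₃0 : 0 ≤ C₃ := by
    have h := le_trans (norm_nonneg _) (h3 s₀ le_rfl)
    nlinarith [Real.exp_pos (-γ * s₀)]
  set s₂ : ℝ := max s₁ s₀ with hs₂
  set K : ℝ := C₂ * C₃ * Real.exp ((m - 2 * γ) * s₀) + C₁ * Real.exp ((m - 2 / (n : ℝ)) * s₀)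
    with hK
  set K' : ℝ := C₂ * Real.exp ((m - γ) * s₂) with hK'
  have main : ∀ s : ℝ, s₀ ≤ s → ‖x s - xS‖ ≤ max K K' * Real.exp (-m * s) := by
    intro s hs
    have hexp : (0 : ℝ) < Real.exp (-m * s) := Real.exp_pos _
    by_cases hcase : s₂ ≤ s
    · -- radial regime
      have hxr := hrad s (le_trans (le_max_left _ _) hcase)
      have hnorm : ‖x s - xS‖ = ⟪x s - xS, νS⟫ := by
        conv_rhs => rw [hxr]
        rw [real_inner_smul_left, real_inner_self_eq_norm_sq, hνS]
        simp
      have hsplit : ⟪x s - xS, νS⟫ = ⟪x s - xS, νS - ν s⟫ + ⟪x s - xS, ν s⟫ := by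
        rw [← inner_add_right]
        congr 1
        abel
      have h2' := h2 s hs
      have h3' := h3 s hs
      rw [norm_sub_rev] at h3'
      have hb1 : ⟪x s - xS, νS - ν s⟫ ≤ (C₂ * Real.exp (-γ * s)) * (C₃ * Real.exp (-γ * s)) := by
        calc ⟪x s - xS, νS - ν s⟫ ≤ ‖x s - xS‖ * ‖νS - ν s‖ := real_inner_le_norm _ _
          _ ≤ (C₂ * Real.exp (-γ * s)) * (C₃ * Real.exp (-γ * s)) :=
            mul_le_mul h2' h3' (norm_nonneg _) (le_trans (norm_nonneg _) h2')
      have hb2 : ⟪x s - xS, ν s⟫ ≤ C₁ * Real.exp (-(2 / (n : ℝ)) * s) :=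
        le_trans (le_abs_self _) (h1 s hs)
      have he1 : (C₂ * Real.exp (-γ * s)) * (C₃ * Real.exp (-γ * s))
          ≤ C₂ * C₃ * Real.exp ((m - 2 * γ) * s₀) * Real.exp (-m * s) := by
        have heq : (C₂ * Real.exp (-γ * s)) * (C₃ * Real.exp (-γ * s))
            = C₂ * C₃ * Real.exp (-(2 * γ) * s) := by
          rw [mul_mul_mul_comm, ← Real.exp_add]; ring_nf
        rw [heq]
        have h := exp_shift_lo (α := 2 * γ) (β := m) hm2γ hs
        calc C₂ * C₃ * Real.exp (-(2 * γ) * s)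
            ≤ C₂ * C₃ * (Real.exp ((m - 2 * γ) * s₀) * Real.exp (-m * s)) :=
              mul_le_mul_of_nonneg_left h (mul_nonneg hC₂0 hC₃0)
          _ = C₂ * C₃ * Real.exp ((m - 2 * γ) * s₀) * Real.exp (-m * s) := by ring
      have he2 : C₁ * Real.exp (-(2 / (n : ℝ)) * s)
          ≤ C₁ * Real.exp ((m - 2 / (n : ℝ)) * s₀) * Real.exp (-m * s) := by
        have h := exp_shift_lo (α := 2 / (n : ℝ)) (β := m) hmn hs
        calc C₁ * Real.exp (-(2 / (n : ℝ)) * s)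
            ≤ C₁ * (Real.exp ((m - 2 / (n : ℝ)) * s₀) * Real.exp (-m * s)) :=
              mul_le_mul_of_nonneg_left h hC₁0
          _ = C₁ * Real.exp ((m - 2 / (n : ℝ)) * s₀) * Real.exp (-m * s) := by ring
      have hKle : K * Real.exp (-m * s) ≤ max K K' * Real.exp (-m * s) :=
        mul_le_mul_of_nonneg_right (le_max_left _ _) hexp.le
      calc ‖x s - xS‖ = ⟪x s - xS, νS - ν s⟫ + ⟪x s - xS, ν s⟫ := by rw [hnorm, hsplit]
        _ ≤ C₂ * C₃ * Real.exp ((m - 2 * γ) * s₀) * Real.exp (-m * s)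
            + C₁ * Real.exp ((m - 2 / (n : ℝ)) * s₀) * Real.exp (-m * s) :=
          add_le_add (le_trans hb1 he1) (le_trans hb2 he2)
        _ = K * Real.exp (-m * s) := by rw [hK]; ring
        _ ≤ max K K' * Real.exp (-m * s) := hKle
    · -- compact regime
      push_neg at hcase
      have h2' := h2 s hs
      have h := exp_shift_hi (α := m) (β := γ) hmγ.le hcase.le
      calc ‖x s - xS‖ ≤ C₂ * Real.exp (-γ * s) := h2'
        _ ≤ C₂ * (Real.exp ((m - γ) * s₂) * Real.exp (-m * s)) :=
          mul_le_mul_of_nonneg_left h hC₂0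
        _ = K' * Real.exp (-m * s) := by rw [hK']; ring
        _ ≤ max K K' * Real.exp (-m * s) :=
          mul_le_mul_of_nonneg_right (le_max_right _ _) hexp.le
  refine ⟨⟨max K K', main⟩, ?_⟩
  intro heq
  exfalso
  set S : Set ℝ := {δ : ℝ | ∃ C : ℝ, ∀ s : ℝ, s₀ ≤ s → ‖x s - xS‖ ≤ C * Real.exp (-δ * s)}
    with hS
  have hmem : m ∈ S := ⟨max K K', main⟩
  by_cases hb : BddAbove S
  · have hle : m ≤ sSup S := le_csSup hb hmem
    rw [← heq] at hle
    exact absurd hle (not_le.mpr hmγ)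
  · have h0 : sSup S = 0 := Real.sSup_of_not_bddAbove hb
    rw [h0] at heq
    exact absurd heq (ne_of_gt hγ)
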